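/- Let R > 0 and 0 < 2M < R, and set χ = 2M/R. Let m : [0,R] → ℝ be continuous with m(R) = M and 0 ≤ 2m(r) < r for all r ∈ (0,R], and let ζ : [0,R] → ℝ be continuous on [0,R], differentiable on (0,R), with ζ(R) = √(1−χ). Suppose that for every r ∈ (0,R) one has m(r) ≥ M r³/R³ and (1/r)·√(1−2m(r)/r)·ζ′(r) ≥ M/R³, and suppose further that ζ(0) > 0 (no horizon inside the star). Then χ = 2M/R < 8/9. -/

import Mathlib

open Real Set

theorem generalized_buchdahl_bondi_bound
    (R M χ : ℝ) (hR : 0 < R) (hM : 0 < 2 * M) (hMR : 2 * M < R)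
    (hχ : χ = 2 * M / R)
    (m ζ ζ' : ℝ → ℝ)
    (hm_cont : ContinuousOn m (Icc 0 R))
    (hmR : m R = M)
    (hm_bound : ∀ r ∈ Ioc (0:ℝ) R, 0 ≤ 2 * m r ∧ 2 * m r < r)
    (hζ_cont : ContinuousOn ζ (Icc 0 R))
    (hζ_deriv : ∀ r ∈ Ioo (0:ℝ) R, HasDerivAt ζ (ζ' r) r)
    (hζR : ζ R = Real.sqrt (1 - χ))
    (hm_ge : ∀ r ∈ Ioo (0:ℝ) R, m r ≥ M * r ^ 3 / R ^ 3)
    (hineq : ∀ r ∈ Ioo (0:ℝ) R,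
      (1 / r) * Real.sqrt (1 - 2 * m r / r) * ζ' r ≥ M / R ^ 3)
    (hζ0 : 0 < ζ 0) :
    χ < 8 / 9 := by
  have hM0 : 0 < M := by linarith
  have hχpos : 0 < χ := by rw [hχ]; positivity
  have hχlt1 : χ < 1 := by
    rw [hχ]; rw [div_lt_one hR]; exact hMR
  have hMR3 : M / R ^ 3 = χ / (2 * R ^ 2) := by
    rw [hχ]; field_simp
  -- the comparison function
  set φ : ℝ → ℝ := fun r => ζ r + (1/2) * Real.sqrt (1 - χ * r ^ 2 / R ^ 2) with hφ
  have hu_pos : ∀ r ∈ Icc (0:ℝ) R, 0 < 1 - χ * r ^ 2 / R ^ 2 ∨ r = R := by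
    intro r hr
    rcases eq_or_lt_of_le hr.2 with h | h
    · right; exact h
    · left
      have h1 : χ * r ^ 2 / R ^ 2 < 1 := by
        have : r ^ 2 < R ^ 2 := by nlinarith [hr.1]
        have : χ * r ^ 2 < R ^ 2 := by nlinarith
        rw [div_lt_one (by positivity)]; exact this
      linarith
  have hupos : ∀ r ∈ Ioo (0:ℝ) R, 0 < 1 - χ * r ^ 2 / R ^ 2 := by
    intro r hr
    have h1 : r ^ 2 < R ^ 2 := by nlinarith [hr.1, hr.2]
    have : χ * r ^ 2 < R ^ 2 := by nlinarith
    have : χ * r ^ 2 / R ^ 2 < 1 := by rw [div_lt_one (by positivity)]; exact this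
    linarith
  have hφ_cont : ContinuousOn φ (Icc 0 R) := by
    apply hζ_cont.add
    apply ContinuousOn.mul continuousOn_const
    apply Continuous.continuousOn
    exact (continuous_const.sub ((continuous_const.mul (continuous_pow 2)).div_const _)).sqrt
  have hφ_deriv : ∀ r ∈ Ioo (0:ℝ) R,
      HasDerivAt φ (ζ' r + (1/2) * ((-(χ * (2 * r)) / R ^ 2) / (2 * Real.sqrt (1 - χ * r ^ 2 / R ^ 2)))) r := by
    intro r hr
    apply (hζ_deriv r hr).add
    have h1 : HasDerivAt (fun r : ℝ => 1 - χ * r ^ 2 / R ^ 2) (-(χ * (2 * r)) / R ^ 2) r := by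
      have := ((hasDerivAt_pow 2 r).const_mul χ).div_const (R ^ 2)
      have h2 := this.const_sub 1
      refine h2.congr_deriv ?_
      simp; ring
    have := (h1.sqrt (by exact ne_of_gt (hupos r hr)))
    exact this.const_mul (1/2)
  have hφ_deriv_nonneg : ∀ r ∈ Ioo (0:ℝ) R,
      0 ≤ ζ' r + (1/2) * ((-(χ * (2 * r)) / R ^ 2) / (2 * Real.sqrt (1 - χ * r ^ 2 / R ^ 2))) := by
    intro r hr
    obtain ⟨hr0, hrR⟩ := hr
    set v := 1 - 2 * m r / r with hv
    set u := 1 - χ * r ^ 2 / R ^ 2 with hu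
    have hub : 0 < u := hupos r ⟨hr0, hrR⟩
    have hvpos : 0 < v := by
      have := (hm_bound r ⟨hr0, le_of_lt hrR⟩).2
      have : 2 * m r / r < 1 := by rw [div_lt_one hr0]; exact this
      simp [hv]; linarith
    have hvu : v ≤ u := by
      have hge := hm_ge r ⟨hr0, hrR⟩
      have : χ * r ^ 2 / R ^ 2 ≤ 2 * m r / r := by
        rw [hχ]
        rw [div_le_div_iff₀ (by positivity) hr0]
        have h2 : 2 * (M * r ^ 3 / R ^ 3) ≤ 2 * m r := by linarith
        have h3 : 2 * M / R * r ^ 2 * r = 2 * (M * r ^ 3 / R ^ 3) * R ^ 2 := by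
          field_simp
        calc 2 * M / R * r ^ 2 * r = 2 * (M * r ^ 3 / R ^ 3) * R ^ 2 := h3
          _ ≤ 2 * m r * R ^ 2 := by nlinarith [sq_nonneg R]
      simp only [hv, hu]; linarith
    have hsv : 0 < Real.sqrt v := Real.sqrt_pos.mpr hvpos
    have hsu : 0 < Real.sqrt u := Real.sqrt_pos.mpr hub
    have hsvu : Real.sqrt v ≤ Real.sqrt u := Real.sqrt_le_sqrt hvu
    have hkey := hineq r ⟨hr0, hrR⟩
    -- ζ' r ≥ (M/R^3) * r / sqrt v
    have hζ'1 : ζ' r ≥ (M / R ^ 3) * r / Real.sqrt v := by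
      have h2 : M / R ^ 3 * r ≤ 1 / r * Real.sqrt v * ζ' r * r :=
        mul_le_mul_of_nonneg_right hkey (le_of_lt hr0)
      have h3 : 1 / r * Real.sqrt v * ζ' r * r = Real.sqrt v * ζ' r := by
        field_simp
      rw [h3] at h2
      rw [ge_iff_le, div_le_iff₀ hsv]
      linarith [h2]
    have hζ'2 : (M / R ^ 3) * r / Real.sqrt v ≥ (M / R ^ 3) * r / Real.sqrt u := by
      apply div_le_div_of_nonneg_left _ hsv hsvu
      positivity
    have hfinal : ζ' r ≥ (M / R ^ 3) * r / Real.sqrt u := le_trans hζ'2 hζ'1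
    have heq : (1/2 : ℝ) * ((-(χ * (2 * r)) / R ^ 2) / (2 * Real.sqrt u)) = -((M / R ^ 3) * r / Real.sqrt u) := by
      rw [hMR3]; field_simp
    rw [heq]; linarith
  -- monotonicity
  have hmono : MonotoneOn φ (Icc 0 R) := by
    apply monotoneOn_of_deriv_nonneg (convex_Icc 0 R) hφ_cont
    · intro x hx
      rw [interior_Icc] at hx
      exact (hφ_deriv x hx).differentiableAt.differentiableWithinAt
    · intro x hx
      rw [interior_Icc] at hx
      rw [(hφ_deriv x hx).deriv]
      exact hφ_deriv_nonneg x hx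
  have h0R : φ 0 ≤ φ R := hmono (by constructor <;> [rfl; linarith]) (by constructor <;> linarith) (le_of_lt hR)
  have hφ0 : φ 0 = ζ 0 + 1/2 := by
    simp only [hφ]
    norm_num
  have hφR : φ R = (3/2) * Real.sqrt (1 - χ) := by
    simp only [hφ, hζR]
    have : 1 - χ * R ^ 2 / R ^ 2 = 1 - χ := by field_simp
    rw [this]; ring
  have hsqrt : (1/3 : ℝ) < Real.sqrt (1 - χ) := by
    rw [hφ0, hφR] at h0R
    linarith
  have h9 : (1/3 : ℝ) ^ 2 < 1 - χ := by
    exact (Real.lt_sqrt (by norm_num)).mp hsqrt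
  nlinarith [h9]
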